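/- Let A = A_x A_y and B = A_x B_y + B_x A_y where B_m = ζ_{1m} σ_z A_m + θ_{1m} σ_y R_z(-2ζ'_m) A_m + φ_{1m} A_m σ_z, with A_m = R_z(ζ'_m)R_y(θ_{0m})R_z(φ_m). If θ_{0x} = 2πm + νπ and θ_{0y} = 2πt + (1-ν)π with ν ∈ {0,1}, then the anticommutator {A,B} = AB + BA is independent of ζ_{1x}, ζ_{1y}, φ_{1x}, φ_{1y}; i.e., the terms proportional to these parameters cancel in {A,B}. -/

import Mathlib

open Matrix

noncomputable section

def σy : Matrix (Fin 2) (Fin 2) ℂ := !![0, -Complex.I; Complex.I, 0]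
def σz : Matrix (Fin 2) (Fin 2) ℂ := !![1, 0; 0, -1]
def Rz (α : ℝ) : Matrix (Fin 2) (Fin 2) ℂ := NormedSpace.exp ((-(Complex.I * (α : ℂ) / 2)) • σz)
def Ry (β : ℝ) : Matrix (Fin 2) (Fin 2) ℂ := NormedSpace.exp ((-(Complex.I * (β : ℂ) / 2)) • σy)

def Am (ζ θ φ : ℝ) : Matrix (Fin 2) (Fin 2) ℂ := Rz ζ * Ry θ * Rz φ

def Bm (ζ θ0 φ ζ1 θ1 φ1 : ℝ) : Matrix (Fin 2) (Fin 2) ℂ :=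
  (ζ1 : ℂ) • (σz * Am ζ θ0 φ) + (θ1 : ℂ) • (σy * Rz (-(2 * ζ)) * Am ζ θ0 φ) +
    (φ1 : ℂ) • (Am ζ θ0 φ * σz)

-- auxiliary
def Umat : Matrix (Fin 2) (Fin 2) ℂ := !![1, 1; Complex.I, -Complex.I]
def Uinv : Matrix (Fin 2) (Fin 2) ℂ := !![1/2, -Complex.I/2; 1/2, Complex.I/2]

lemma hUUinv : Umat * Uinv = 1 := by
  ext i j
  fin_cases i <;> fin_cases j <;>
    simp [Umat, Uinv, Matrix.mul_apply, Fin.sum_univ_two] <;> ring_nf <;>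
    simp [Complex.I_sq] <;> ring

lemma hUinvU : Uinv * Umat = 1 := by
  ext i j
  fin_cases i <;> fin_cases j <;>
    simp [Umat, Uinv, Matrix.mul_apply, Fin.sum_univ_two] <;> ring_nf <;>
    simp [Complex.I_sq] <;> ring

def Uu : (Matrix (Fin 2) (Fin 2) ℂ)ˣ := ⟨Umat, Uinv, hUUinv, hUinvU⟩

lemma exp_c_σz (c : ℂ) :
    NormedSpace.exp (c • σz) = !![Complex.exp c, 0; 0, Complex.exp (-c)] := by
  have h : c • σz = Matrix.diagonal ![c, -c] := by
    ext i j
    fin_cases i <;> fin_cases j <;> simp [σz, Matrix.diagonal]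
  rw [h, Matrix.exp_diagonal]
  ext i j
  fin_cases i <;> fin_cases j <;>
    simp [Matrix.diagonal, ← Complex.exp_eq_exp_ℂ]

lemma Rz_eq (α : ℝ) :
    Rz α = !![Complex.exp (-(Complex.I * α / 2)), 0; 0, Complex.exp (Complex.I * α / 2)] := by
  rw [Rz, exp_c_σz]
  ring_nf

lemma σy_conj : σy = (Uu : Matrix (Fin 2) (Fin 2) ℂ) * σz * ((Uu⁻¹ : (Matrix (Fin 2) (Fin 2) ℂ)ˣ) : Matrix (Fin 2) (Fin 2) ℂ) := by
  show σy = Umat * σz * Uinv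
  ext i j
  fin_cases i <;> fin_cases j <;>
    simp [σy, σz, Umat, Uinv, Matrix.mul_apply, Fin.sum_univ_two] <;> ring

lemma Ry_eq (β : ℝ) :
    Ry β = !![(Real.cos (β / 2) : ℂ), -(Real.sin (β / 2) : ℂ);
              (Real.sin (β / 2) : ℂ), (Real.cos (β / 2) : ℂ)] := by
  have h : (-(Complex.I * (β : ℂ) / 2)) • σy
      = (Uu : Matrix (Fin 2) (Fin 2) ℂ) * ((-(Complex.I * (β : ℂ) / 2)) • σz) *
        ((Uu⁻¹ : (Matrix (Fin 2) (Fin 2) ℂ)ˣ) : Matrix (Fin 2) (Fin 2) ℂ) := by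
    rw [mul_smul_comm, smul_mul_assoc, ← σy_conj]
  rw [Ry, h, Matrix.exp_units_conj, exp_c_σz]
  show Umat * _ * Uinv = _
  have hc : (Real.cos (β / 2) : ℂ) = Complex.cos ((β : ℂ) / 2) := by
    push_cast [Complex.ofReal_cos]; ring_nf
  have hs : (Real.sin (β / 2) : ℂ) = Complex.sin ((β : ℂ) / 2) := by
    push_cast [Complex.ofReal_sin]; ring_nf
  rw [hc, hs, Complex.cos, Complex.sin]
  ext i j
  fin_cases i <;> fin_cases j <;>
    · simp [Umat, Uinv, Matrix.mul_apply, Fin.sum_univ_two]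
      rw [show -(Complex.I * β / 2) = -((β:ℂ)/2) * Complex.I by ring,
          show Complex.I * β / 2 = ((β:ℂ)/2) * Complex.I by ring]
      try ring
      try (simp only [Complex.I_sq]; ring)
      try (ring_nf; simp only [Complex.I_sq]; ring)
      try (ring_nf; simp [Complex.I_sq]; ring_nf)

def Jmat : Matrix (Fin 2) (Fin 2) ℂ := !![0, -1; 1, 0]

lemma Ry_even (k : ℤ) : Ry (2 * Real.pi * k) = ((-1 : ℂ) ^ k) • (1 : Matrix (Fin 2) (Fin 2) ℂ) := by
  rw [Ry_eq]
  have h2 : (2 * Real.pi * k) / 2 = 0 + (k : ℝ) * Real.pi := by ring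
  rw [h2, Real.cos_add_int_mul_pi, Real.sin_add_int_mul_pi]
  ext i j
  fin_cases i <;> fin_cases j <;> simp

lemma Ry_odd (k : ℤ) : Ry (2 * Real.pi * k + Real.pi) = ((-1 : ℂ) ^ k) • Jmat := by
  rw [Ry_eq]
  have h2 : (2 * Real.pi * k + Real.pi) / 2 = Real.pi / 2 + (k : ℝ) * Real.pi := by ring
  rw [h2, Real.cos_add_int_mul_pi, Real.sin_add_int_mul_pi]
  ext i j
  fin_cases i <;> fin_cases j <;> simp [Jmat]

lemma σz_Rz (α : ℝ) : σz * Rz α = Rz α * σz := by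
  rw [Rz_eq]
  ext i j
  fin_cases i <;> fin_cases j <;>
    simp [σz, Matrix.mul_apply, Fin.sum_univ_two] <;> ring

lemma σz_one : σz * (1 : Matrix (Fin 2) (Fin 2) ℂ) = (1 : ℂ) • ((1 : Matrix (Fin 2) (Fin 2) ℂ) * σz) := by
  simp

lemma σz_J : σz * Jmat = (-1 : ℂ) • (Jmat * σz) := by
  ext i j
  fin_cases i <;> fin_cases j <;>
    simp [σz, Jmat, Matrix.mul_apply, Fin.sum_univ_two]

lemma σz_Am (ζ θ φ : ℝ) (ε : ℂ) (h : σz * Ry θ = ε • (Ry θ * σz)) :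
    σz * Am ζ θ φ = ε • (Am ζ θ φ * σz) := by
  rw [Am, show σz * (Rz ζ * Ry θ * Rz φ) = ((σz * Rz ζ) * Ry θ) * Rz φ by
        simp only [mul_assoc],
      σz_Rz, mul_assoc (Rz ζ), h, mul_smul_comm, smul_mul_assoc]
  congr 1
  simp only [mul_assoc, σz_Rz]

lemma key (Ax Ay Cx Cy S : Matrix (Fin 2) (Fin 2) ℂ) (e : ℂ) (he : e * e = 1)
    (hx : S * Ax = e • (Ax * S)) (hy : S * Ay = (-e) • (Ay * S))
    (θ1x θ1y ζ1x ζ1y φ1x φ1y ζ1x' ζ1y' φ1x' φ1y' : ℂ) :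
    (Ax * Ay) * (Ax * (ζ1y • (S * Ay) + θ1y • Cy + φ1y • (Ay * S)) +
        (ζ1x • (S * Ax) + θ1x • Cx + φ1x • (Ax * S)) * Ay) +
      (Ax * (ζ1y • (S * Ay) + θ1y • Cy + φ1y • (Ay * S)) +
        (ζ1x • (S * Ax) + θ1x • Cx + φ1x • (Ax * S)) * Ay) * (Ax * Ay)
    = (Ax * Ay) * (Ax * (ζ1y' • (S * Ay) + θ1y • Cy + φ1y' • (Ay * S)) +
        (ζ1x' • (S * Ax) + θ1x • Cx + φ1x' • (Ax * S)) * Ay) +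
      (Ax * (ζ1y' • (S * Ay) + θ1y • Cy + φ1y' • (Ay * S)) +
        (ζ1x' • (S * Ax) + θ1x • Cx + φ1x' • (Ax * S)) * Ay) * (Ax * Ay) := by
  have hx' : Ax * S = e • (S * Ax) := by
    rw [hx, smul_smul, he, one_smul]
  have hy' : Ay * S = (-e) • (S * Ay) := by
    rw [hy, smul_smul]
    simp [he]
  set A := Ax * Ay with hA
  set W := S * (Ax * Ay) with hWdef
  have t1 : Ax * (S * Ay) = e • W := by
    rw [← mul_assoc, hx', smul_mul_assoc, hWdef, mul_assoc]
  have t2 : Ax * (Ay * S) = (-1 : ℂ) • W := by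
    rw [hy', mul_smul_comm, t1, smul_smul]
    congr 1
    simpa using congrArg Neg.neg he
  have t3 : (S * Ax) * Ay = W := by rw [hWdef, mul_assoc]
  have t4 : (Ax * S) * Ay = e • W := by rw [hx', smul_mul_assoc, t3]
  have hAS : A * S = (-1 : ℂ) • W := by
    rw [hA, mul_assoc, t2]
  have hAW : A * W + W * A = 0 := by
    have h1 : A * W = (A * S) * A := by
      rw [show W = S * A from rfl, ← mul_assoc]
    have h2 : W * A = -(A * W) := by
      rw [h1, hAS]
      simp [smul_mul_assoc]
    rw [h2]; abel
  have expand : ∀ a b c d : ℂ,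
      Ax * (a • (S * Ay) + θ1y • Cy + b • (Ay * S)) +
        (c • (S * Ax) + θ1x • Cx + d • (Ax * S)) * Ay
      = (θ1y • (Ax * Cy) + θ1x • (Cx * Ay)) + (a * e - b + c + d * e) • W := by
    intro a b c d
    simp only [mul_add, add_mul, mul_smul_comm, smul_mul_assoc, t1, t2, t3, t4,
      smul_smul]
    module
  rw [expand, expand]
  set K := θ1y • (Ax * Cy) + θ1x • (Cx * Ay) with hK
  have final : ∀ c : ℂ, A * (K + c • W) + (K + c • W) * A = A * K + K * A := by
    intro c
    have : A * (K + c • W) + (K + c • W) * A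
        = (A * K + K * A) + c • (A * W + W * A) := by
      simp only [mul_add, add_mul, mul_smul_comm, smul_mul_assoc, smul_add]
      abel
    rw [this, hAW, smul_zero, add_zero]
  rw [final, final]

theorem stmt_12 (ν : ℕ) (hν : ν = 0 ∨ ν = 1) (m t : ℤ) (θ0x θ0y ζx ζy φx φy θ1x θ1y : ℝ)
    (hθx : θ0x = 2 * Real.pi * m + ν * Real.pi)
    (hθy : θ0y = 2 * Real.pi * t + (1 - (ν : ℝ)) * Real.pi) :
    ∀ ζ1x ζ1y φ1x φ1y ζ1x' ζ1y' φ1x' φ1y' : ℝ,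
      (Am ζx θ0x φx * Am ζy θ0y φy) *
          (Am ζx θ0x φx * Bm ζy θ0y φy ζ1y θ1y φ1y + Bm ζx θ0x φx ζ1x θ1x φ1x * Am ζy θ0y φy) +
        (Am ζx θ0x φx * Bm ζy θ0y φy ζ1y θ1y φ1y + Bm ζx θ0x φx ζ1x θ1x φ1x * Am ζy θ0y φy) *
          (Am ζx θ0x φx * Am ζy θ0y φy)
      = (Am ζx θ0x φx * Am ζy θ0y φy) *
          (Am ζx θ0x φx * Bm ζy θ0y φy ζ1y' θ1y φ1y' + Bm ζx θ0x φx ζ1x' θ1x φ1x' * Am ζy θ0y φy) +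
        (Am ζx θ0x φx * Bm ζy θ0y φy ζ1y' θ1y φ1y' + Bm ζx θ0x φx ζ1x' θ1x φ1x' * Am ζy θ0y φy) *
          (Am ζx θ0x φx * Am ζy θ0y φy) := by
  intro ζ1x ζ1y φ1x φ1y ζ1x' ζ1y' φ1x' φ1y'
  -- commutation facts
  have hmain : ∃ e : ℂ, e * e = 1 ∧
      σz * Am ζx θ0x φx = e • (Am ζx θ0x φx * σz) ∧
      σz * Am ζy θ0y φy = (-e) • (Am ζy θ0y φy * σz) := by
    rcases hν with h | h <;> subst h
    · refine ⟨1, by ring, ?_, ?_⟩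
      · apply σz_Am
        have hx0 : θ0x = 2 * Real.pi * m := by rw [hθx]; push_cast; ring
        rw [hx0, Ry_even]
        rw [mul_smul_comm, smul_mul_assoc]
        simp
      · apply σz_Am
        have hy0 : θ0y = 2 * Real.pi * t + Real.pi := by rw [hθy]; push_cast; ring
        rw [hy0, Ry_odd, mul_smul_comm, smul_mul_assoc, σz_J, smul_smul, smul_smul]
        congr 1; ring
    · refine ⟨-1, by ring, ?_, ?_⟩
      · apply σz_Am
        have hx0 : θ0x = 2 * Real.pi * m + Real.pi := by rw [hθx]; push_cast; ring
        rw [hx0, Ry_odd, mul_smul_comm, smul_mul_assoc, σz_J, smul_smul, smul_smul]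
        congr 1; ring
      · apply σz_Am
        have hy0 : θ0y = 2 * Real.pi * t := by rw [hθy]; push_cast; ring
        rw [hy0, Ry_even, mul_smul_comm, smul_mul_assoc]
        simp
  obtain ⟨e, he, hx, hy⟩ := hmain
  simp only [Bm]
  exact key (Am ζx θ0x φx) (Am ζy θ0y φy)
    (σy * Rz (-(2 * ζx)) * Am ζx θ0x φx) (σy * Rz (-(2 * ζy)) * Am ζy θ0y φy)
    σz e he hx hy _ _ _ _ _ _ _ _ _ _
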